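/- Let σ ≠ 0, β ≠ 0 and let K : [0,∞) → ℝ be measurable and locally square integrable with ∫₀^∞ K(s)² ds = +∞. If m : [0,∞) → [0,∞) is a continuous nonnegative function satisfying m(t) = σ² + β²∫₀ᵗ K(t−s)² m(s) ds for all t ≥ 0, then m(t) ≥ σ² + σ²β²∫₀ᵗ K(s)² ds for all t ≥ 0, and consequently lim_{t→∞} m(t) = +∞. -/

import Mathlib

open MeasureTheory Filter Set

/-- Remark 4.3: if `K ∉ L²(0,∞)` (but is locally square integrable), then any continuous
nonnegative solution of `m(t) = σ² + β² ∫₀ᵗ K(t−s)² m(s) ds` satisfies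
`m(t) ≥ σ² + σ²β² ∫₀ᵗ K(s)² ds` and hence `m(t) → +∞` as `t → ∞`. -/
theorem blackScholesLongMemory_msq_diverges
    (σ β : ℝ) (hσ : σ ≠ 0) (hβ : β ≠ 0)
    (K : ℝ → ℝ) (hKmeas : Measurable K)
    (hKloc : ∀ T > (0:ℝ), IntegrableOn (fun s => K s ^ 2) (Icc 0 T))
    (hKnotL2 : ¬ IntegrableOn (fun s => K s ^ 2) (Ioi 0))
    (m : ℝ → ℝ) (hmcont : ContinuousOn m (Ici 0))
    (hmnonneg : ∀ t ≥ (0:ℝ), 0 ≤ m t)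
    (heq : ∀ t ≥ (0:ℝ), m t = σ ^ 2 + β ^ 2 * ∫ s in (0:ℝ)..t, K (t - s) ^ 2 * m s) :
    (∀ t ≥ (0:ℝ), σ ^ 2 + σ ^ 2 * β ^ 2 * ∫ s in (0:ℝ)..t, K s ^ 2 ≤ m t) ∧
      Tendsto m atTop atTop := by
  have hKii : ∀ t : ℝ, 0 ≤ t → IntervalIntegrable (fun s => K s ^ 2) volume 0 t := by
    intro t ht
    rcases ht.eq_or_lt with rfl | ht
    · exact IntervalIntegrable.refl
    · exact (intervalIntegrable_iff_integrableOn_Ioc_of_le ht.le).mpr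
        ((hKloc t ht).mono_set Ioc_subset_Icc_self)
  have hmge : ∀ s : ℝ, 0 ≤ s → σ ^ 2 ≤ m s := by
    intro s hs
    rw [heq s hs]
    have h0 : 0 ≤ ∫ u in (0:ℝ)..s, K (s - u) ^ 2 * m u :=
      intervalIntegral.integral_nonneg hs fun u hu =>
        mul_nonneg (sq_nonneg _) (hmnonneg u hu.1)
    nlinarith [mul_nonneg (sq_nonneg β) h0]
  have key : ∀ t : ℝ, 0 ≤ t →
      σ ^ 2 + σ ^ 2 * β ^ 2 * ∫ s in (0:ℝ)..t, K s ^ 2 ≤ m t := by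
    intro t ht
    rw [heq t ht]
    have hKt : IntervalIntegrable (fun s => K (t - s) ^ 2) volume 0 t := by
      have h := ((hKii t ht).comp_sub_left t).symm
      simpa using h
    obtain ⟨C, hC⟩ := (isCompact_Icc (a := (0:ℝ)) (b := t)).exists_bound_of_continuousOn
      (hmcont.mono Icc_subset_Ici_self)
    have hprod : IntervalIntegrable (fun s => K (t - s) ^ 2 * m s) volume 0 t := by
      rw [intervalIntegrable_iff_integrableOn_Ioc_of_le ht] at hKt ⊢
      have hm_meas : AEStronglyMeasurable m (volume.restrict (Ioc 0 t)) :=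
        ((hmcont.mono Icc_subset_Ici_self).aestronglyMeasurable measurableSet_Icc).mono_measure
          (Measure.restrict_mono Ioc_subset_Icc_self le_rfl)
      have hm_bd : ∀ᵐ x ∂(volume.restrict (Ioc 0 t)), ‖m x‖ ≤ C :=
        (ae_restrict_iff' measurableSet_Ioc).mpr
          (Filter.Eventually.of_forall fun x hx => hC x (Ioc_subset_Icc_self hx))
      have h := Integrable.bdd_mul (c := C) hKt hm_meas hm_bd
      simpa [mul_comm, IntegrableOn] using h
    have hmono : (∫ s in (0:ℝ)..t, K (t - s) ^ 2 * σ ^ 2) ≤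
        ∫ s in (0:ℝ)..t, K (t - s) ^ 2 * m s :=
      intervalIntegral.integral_mono_on ht (hKt.mul_const _) hprod fun s hs =>
        mul_le_mul_of_nonneg_left (hmge s hs.1) (sq_nonneg _)
    have hcv : (∫ s in (0:ℝ)..t, K (t - s) ^ 2) = ∫ s in (0:ℝ)..t, K s ^ 2 := by
      simpa using intervalIntegral.integral_comp_sub_left (a := 0) (b := t) (fun s => K s ^ 2) t
    have heqm : (∫ s in (0:ℝ)..t, K (t - s) ^ 2 * σ ^ 2)
        = σ ^ 2 * ∫ s in (0:ℝ)..t, K s ^ 2 := by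
      rw [intervalIntegral.integral_mul_const, hcv, mul_comm]
    rw [heqm] at hmono
    nlinarith [mul_le_mul_of_nonneg_left hmono (sq_nonneg β)]
  set F : ℝ → ℝ := fun t => ∫ s in (0:ℝ)..t, K s ^ 2 with hF
  have hFmono : ∀ a b : ℝ, 0 ≤ a → a ≤ b → F a ≤ F b := by
    intro a b ha hab
    have h1 : IntervalIntegrable (fun s => K s ^ 2) volume 0 a := hKii a ha
    have h2 : IntervalIntegrable (fun s => K s ^ 2) volume a b := by
      refine (hKii b (ha.trans hab)).mono_set ?_
      rw [uIcc_of_le hab, uIcc_of_le (ha.trans hab)]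
      exact Icc_subset_Icc ha le_rfl
    have hadd := intervalIntegral.integral_add_adjacent_intervals h1 h2
    have hnn : 0 ≤ ∫ s in a..b, K s ^ 2 :=
      intervalIntegral.integral_nonneg hab fun u _ => sq_nonneg _
    simp only [hF]
    linarith [hadd]
  have hFunb : ∀ b : ℝ, ∃ T, 0 ≤ T ∧ b ≤ F T := by
    intro b
    by_contra h
    push_neg at h
    apply hKnotL2
    refine integrableOn_Ioi_of_intervalIntegral_norm_bounded b 0
      (fun i : ℝ => ?_) (tendsto_id (α := ℝ)) ?_
    · rcases le_or_gt i 0 with hi | hi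
      · rw [Ioc_eq_empty (by simpa using hi)]
        exact integrableOn_empty
      · exact (hKloc i hi).mono_set Ioc_subset_Icc_self
    · filter_upwards [eventually_ge_atTop (0 : ℝ)] with i hi
      have : (∫ x in (0:ℝ)..i, ‖K x ^ 2‖) = F i := by
        simp [hF, norm_pow, sq_abs]
      simp only [id_eq]
      rw [this]
      exact (h i hi).le
  have hFtop : Tendsto F atTop atTop := by
    rw [tendsto_atTop_atTop]
    intro b
    obtain ⟨T, hT0, hTb⟩ := hFunb b
    exact ⟨T, fun a ha => hTb.trans (hFmono T a hT0 ha)⟩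
  have hlow : Tendsto (fun t => σ ^ 2 + σ ^ 2 * β ^ 2 * F t) atTop atTop := by
    apply tendsto_atTop_add_const_left
    exact hFtop.const_mul_atTop (by positivity)
  refine ⟨key, tendsto_atTop_mono' atTop ?_ hlow⟩
  filter_upwards [eventually_ge_atTop (0 : ℝ)] with t ht
  exact key t ht
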